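/- For every digraph D, the following are equivalent: (a) there is no non-zero weight vector w with S_D·w ≤ 𝟎 (i.e., D is a counterexample to Conjecture C4); (b) there exists a nonnegative real vector p with S_Dᵀ·p > 𝟎 (i.e., the reverse digraph ←D is a counterexample to Conjecture C3). In particular, Conjectures C3 and C4 are equivalent. -/

import Mathlib

open Matrix

/-- A digraph whose underlying graph is simple: a finite vertex set with an
irreflexive arc relation having no pair of opposite arcs. -/
structure SimpleDigraph (V : Type) where
  Adj : V → V → Prop
  loopless : ∀ v, ¬ Adj v v
  no_opposite : ∀ u v, Adj u v → ¬ Adj v u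

namespace SimpleDigraph

variable {V : Type}

/-- `D.DistTwo u v` says that `v` is at out-distance exactly `2` from `u`,
i.e. the shortest directed path from `u` to `v` has length `2`. -/
def DistTwo (D : SimpleDigraph V) (u v : V) : Prop :=
  u ≠ v ∧ ¬ D.Adj u v ∧ ∃ w, D.Adj u w ∧ D.Adj w v

open Classical in
/-- The second-neighborhood matrix of a digraph: the `(i,j)` entry is `1` if
`d(i,j) = 1`, `-1` if `d(i,j) = 2`, and `0` otherwise. -/
noncomputable def sMatrix (D : SimpleDigraph V) : Matrix V V ℝ :=
  Matrix.of fun i j => if D.Adj i j then 1 else if D.DistTwo i j then -1 else 0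

/-- `d⁺(v)`, the number of vertices at out-distance `1` from `v`. -/
noncomputable def outDeg (D : SimpleDigraph V) (v : V) : ℕ :=
  Nat.card {u : V // D.Adj v u}

/-- `d⁺⁺(v)`, the number of vertices at out-distance `2` from `v`. -/
noncomputable def outDeg2 (D : SimpleDigraph V) (v : V) : ℕ :=
  Nat.card {u : V // D.DistTwo v u}

/-- `d⁻(v)`, the number of vertices at in-distance `1` from `v`. -/
noncomputable def inDeg (D : SimpleDigraph V) (v : V) : ℕ :=
  Nat.card {u : V // D.Adj u v}

/-- `d⁻⁻(v)`, the number of vertices at in-distance `2` from `v`. -/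
noncomputable def inDeg2 (D : SimpleDigraph V) (v : V) : ℕ :=
  Nat.card {u : V // D.DistTwo u v}

/-- The number of arcs of a digraph. -/
noncomputable def numArcs (D : SimpleDigraph V) : ℕ :=
  Nat.card {p : V × V // D.Adj p.1 p.2}

end SimpleDigraph


/-- Conjecture C3: for every digraph `D` and every weight vector `w` on `D`,
`S_D · w ≯ 𝟎`. -/
def ConjC3 : Prop :=
  ∀ (n : ℕ), 0 < n → ∀ D : SimpleDigraph (Fin n), ∀ w : Fin n → ℝ,
    (∀ i, 0 ≤ w i) → ∃ i : Fin n, (D.sMatrix *ᵥ w) i ≤ 0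

/-- Conjecture C4: for every digraph `D` there is a non-zero weight vector `w`
with `S_D · w ≤ 𝟎`. -/
def ConjC4 : Prop :=
  ∀ (n : ℕ), 0 < n → ∀ D : SimpleDigraph (Fin n),
    ∃ w : Fin n → ℝ, (∀ i, 0 ≤ w i) ∧ w ≠ 0 ∧ D.sMatrix *ᵥ w ≤ 0

lemma gordan {n : ℕ} (hn : 0 < n) (A : Matrix (Fin n) (Fin n) ℝ) :
    (¬ ∃ w : Fin n → ℝ, (∀ i, 0 ≤ w i) ∧ w ≠ 0 ∧ A *ᵥ w ≤ 0) ↔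
      ∃ p : Fin n → ℝ, (∀ i, 0 ≤ p i) ∧ ∀ i, 0 < (Aᵀ *ᵥ p) i := by
  constructor
  · intro h
    -- separate the image of the standard simplex from the nonpositive orthant
    set L : (Fin n → ℝ) →L[ℝ] (Fin n → ℝ) := LinearMap.toContinuousLinearMap A.mulVecLin
    set s : Set (Fin n → ℝ) := A.mulVecLin '' stdSimplex ℝ (Fin n) with hs
    set t : Set (Fin n → ℝ) := {x | ∀ i, x i ≤ 0} with ht
    have hsc : Convex ℝ s := (convex_stdSimplex ℝ (Fin n)).linear_image A.mulVecLin
    have hscomp : IsCompact s := by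
      have := (isCompact_stdSimplex ℝ (Fin n)).image L.continuous
      simpa [L, s] using this
    have htc : Convex ℝ t := by
      intro x hx y hy a b ha hb hab
      intro i
      have hx' := hx i
      have hy' := hy i
      have : a * x i + b * y i ≤ 0 := by nlinarith
      simpa [Pi.add_apply, Pi.smul_apply, smul_eq_mul] using this
    have htcl : IsClosed t := by
      have : t = ⋂ i, {x : Fin n → ℝ | x i ≤ 0} := by
        ext x; simp [ht, Set.mem_iInter]
      rw [this]
      exact isClosed_iInter fun i => isClosed_le (continuous_apply i) continuous_const
    have hdisj : Disjoint s t := by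
      rw [Set.disjoint_left]
      rintro x ⟨w, hw, rfl⟩ hxt
      refine h ⟨w, hw.1, ?_, fun i => hxt i⟩
      intro hw0
      have := hw.2
      rw [hw0] at this
      simp at this
    obtain ⟨f, u, v, hfu, huv, hvf⟩ :=
      geometric_hahn_banach_compact_closed hsc hscomp htc htcl hdisj
    have h0t : (0 : Fin n → ℝ) ∈ t := fun i => le_refl 0
    have hv0 : v < 0 := by have := hvf 0 h0t; simpa using this
    have hft : ∀ x ∈ t, 0 ≤ f x := by
      intro x hx
      by_contra hfx
      push_neg at hfx
      have hc : (0 : ℝ) < (v - 1) / f x := div_pos_of_neg_of_neg (by linarith) hfx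
      have hcx : ((v - 1) / f x) • x ∈ t := by
        intro i
        have := hx i
        have : ((v - 1) / f x) * x i ≤ 0 := mul_nonpos_of_nonneg_of_nonpos hc.le this
        simpa [smul_eq_mul] using this
      have := hvf _ hcx
      rw [f.map_smul] at this
      have : v < (v - 1) / f x * f x := this
      rw [div_mul_cancel₀ _ (ne_of_lt hfx)] at this
      linarith
    refine ⟨fun i => f (-(Pi.single i 1)), ?_, ?_⟩
    · intro i
      refine hft _ ?_
      intro j
      simp only [Pi.neg_apply, neg_nonpos]
      by_cases hij : i = j <;> simp [Pi.single_apply, hij]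
    · intro j
      have hcol : (Aᵀ j) ∈ s := by
        refine ⟨Pi.single j 1, ⟨fun i => ?_, ?_⟩, ?_⟩
        · by_cases hij : j = i <;> simp [Pi.single_apply, hij]
        · simp [Finset.sum_pi_single']
        · rw [Matrix.mulVecLin_apply, Matrix.mulVec_single_one]; rfl
      have hfcol : f (Aᵀ j) < u := hfu _ hcol
      have key : (Aᵀ *ᵥ fun i => f (-(Pi.single i 1))) j = - f (Aᵀ j) := by
        have hrep : (Aᵀ j) = ∑ i, (A i j) • (Pi.single i (1 : ℝ) : Fin n → ℝ) := by
          ext k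
          simp [Pi.single_apply, Finset.sum_apply, mul_comm]
        rw [hrep, map_sum]
        simp only [f.map_smul, map_neg, smul_eq_mul]
        simp [Matrix.mulVec, dotProduct, Finset.sum_neg_distrib, mul_neg]
      rw [key]
      linarith
  · rintro ⟨p, hp, hpos⟩ ⟨w, hw, hw0, hAw⟩
    have h1 : p ⬝ᵥ (A *ᵥ w) ≤ 0 := by
      apply Finset.sum_nonpos
      intro i _
      exact mul_nonpos_of_nonneg_of_nonpos (hp i) (hAw i)
    have h2 : 0 < (Aᵀ *ᵥ p) ⬝ᵥ w := by
      apply Finset.sum_pos'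
      · intro i _
        exact mul_nonneg (hpos i).le (hw i)
      · obtain ⟨j, hj⟩ := Function.ne_iff.mp hw0
        exact ⟨j, Finset.mem_univ j, mul_pos (hpos j) (lt_of_le_of_ne (hw j) (Ne.symm hj))⟩
    rw [Matrix.mulVec_transpose, ← Matrix.dotProduct_mulVec] at h2
    linarith

def SimpleDigraph.rev {V : Type} (D : SimpleDigraph V) : SimpleDigraph V where
  Adj u v := D.Adj v u
  loopless v := D.loopless v
  no_opposite u v h h' := D.no_opposite v u h h'

lemma SimpleDigraph.rev_distTwo {V : Type} (D : SimpleDigraph V) (u v : V) :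
    D.rev.DistTwo u v ↔ D.DistTwo v u := by
  constructor
  · rintro ⟨hne, hna, w, h1, h2⟩
    exact ⟨hne.symm, hna, w, h2, h1⟩
  · rintro ⟨hne, hna, w, h1, h2⟩
    exact ⟨hne.symm, hna, w, h2, h1⟩

lemma SimpleDigraph.sMatrix_rev {V : Type} (D : SimpleDigraph V) :
    D.rev.sMatrix = D.sMatrixᵀ := by
  classical
  ext i j
  simp only [sMatrix, Matrix.transpose_apply, Matrix.of_apply]
  have h1 : D.rev.Adj i j ↔ D.Adj j i := Iff.rfl
  have h2 := D.rev_distTwo i j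
  by_cases ha : D.Adj j i
  · rw [if_pos (h1.mpr ha), if_pos ha]
  · rw [if_neg (fun h => ha (h1.mp h)), if_neg ha]
    by_cases hd : D.DistTwo j i
    · rw [if_pos (h2.mpr hd), if_pos hd]
    · rw [if_neg (fun h => hd (h2.mp h)), if_neg hd]

/-- A digraph `D` admits no non-zero weight vector `w` with `S_D · w ≤ 𝟎`
(i.e. `D` is a counterexample to Conjecture C4) if and only if there is a
nonnegative vector `p` with `S_Dᵀ · p > 𝟎` (i.e. the reverse digraph is a
counterexample to Conjecture C3).  In particular, C3 and C4 are equivalent. -/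
theorem counterexample_C4_iff_reverse_counterexample_C3
    {n : ℕ} (hn : 0 < n) (D : SimpleDigraph (Fin n)) :
    ((¬ ∃ w : Fin n → ℝ, (∀ i, 0 ≤ w i) ∧ w ≠ 0 ∧ D.sMatrix *ᵥ w ≤ 0) ↔
      ∃ p : Fin n → ℝ, (∀ i, 0 ≤ p i) ∧ ∀ i, 0 < (D.sMatrixᵀ *ᵥ p) i) ∧
    (ConjC3 ↔ ConjC4) := by
  refine ⟨gordan hn D.sMatrix, ?_, ?_⟩
  · intro h3 m hm E
    by_contra hE
    obtain ⟨p, hp, hpos⟩ := (gordan hm E.sMatrix).mp hE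
    rw [← SimpleDigraph.sMatrix_rev] at hpos
    obtain ⟨i, hi⟩ := h3 m hm E.rev p hp
    exact absurd (hpos i) (not_lt.mpr hi)
  · intro h4 m hm E w hw
    by_contra hc
    push_neg at hc
    have hpos : ∀ i, 0 < ((E.rev).sMatrixᵀ *ᵥ w) i := by
      have : (E.rev).sMatrixᵀ = E.sMatrix := by
        rw [SimpleDigraph.sMatrix_rev, Matrix.transpose_transpose]
      rw [this]
      exact hc
    have := (gordan hm (E.rev).sMatrix).mpr ⟨w, hw, hpos⟩
    exact this (h4 m hm E.rev)
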